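/- Fix d ∈ [0, 1), let (H_n) be Borel probability measures on ℝ² converging weakly to H, and let (d_n) be reals converging to d. If for each n the offer s^n ∈ S maximizes π̂(·, H_n, d_n) over S, and s^n converges to some s ∈ S, then s maximizes π̂(·, H, d) over S; that is, the argmax correspondence is upper hemicontinuous at (H, d). -/

import Mathlib

open MeasureTheory Filter

noncomputable section

/-- The unit simplex of offers `(s_A, s_B, s_C)`. -/
def SimplexS : Set (ℝ × ℝ × ℝ) :=
  {s | 0 ≤ s.1 ∧ 0 ≤ s.2.1 ∧ 0 ≤ s.2.2 ∧ s.1 + s.2.1 + s.2.2 = 1}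

/-- Acceptance probability `Λ(b, c, G) = G({(τB, τC) : τB ≤ b or τC ≤ c})`. -/
def Lam (b c : ℝ) (G : Measure (ℝ × ℝ)) : ℝ :=
  (G {p : ℝ × ℝ | p.1 ≤ b ∨ p.2 ≤ c}).toReal

/-- Joint CDF `G(x, y) = G((−∞, x] × (−∞, y])`. -/
def jointCDF (G : Measure (ℝ × ℝ)) (x y : ℝ) : ℝ :=
  (G (Set.Iic x ×ˢ Set.Iic y)).toReal

/-- Proposer's expected payoff `π(s, G, d) = d + (s_A − d)·Λ(s_B, s_C, G)`. -/
def pay (s : ℝ × ℝ × ℝ) (G : Measure (ℝ × ℝ)) (d : ℝ) : ℝ :=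
  d + (s.1 - d) * Lam s.2.1 s.2.2 G

/-- Modified payoff `π̂(s, G, d) = d + max{s_A − d, 0}·Λ(s_B, s_C, G)`. -/
def payHat (s : ℝ × ℝ × ℝ) (G : Measure (ℝ × ℝ)) (d : ℝ) : ℝ :=
  d + max (s.1 - d) 0 * Lam s.2.1 s.2.2 G

/-- The uniform distribution on `[0, τ]`. -/
def uniformIcc (τ : ℝ) : Measure ℝ :=
  (ENNReal.ofReal τ)⁻¹ • volume.restrict (Set.Icc 0 τ)

/-- Weak convergence of measures: convergence of integrals of all bounded continuous
functions. -/
def WeakLim (Hn : ℕ → Measure (ℝ × ℝ)) (H : Measure (ℝ × ℝ)) : Prop :=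
  ∀ f : BoundedContinuousFunction (ℝ × ℝ) ℝ,
    Tendsto (fun n => ∫ p, f p ∂(Hn n)) atTop (nhds (∫ p, f p ∂H))

open Topology in
theorem nhds_notation_check : (𝓝 (0:ℝ)) = nhds 0 := rfl

open Topology

def Eset (b c : ℝ) : Set (ℝ × ℝ) := {p : ℝ × ℝ | p.1 ≤ b ∨ p.2 ≤ c}

lemma measurable_Eset (b c : ℝ) : MeasurableSet (Eset b c) :=
  (measurable_fst measurableSet_Iic).union (measurable_snd measurableSet_Iic)

lemma line1_null (τ : ℝ) (H : Measure (ℝ × ℝ))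
    (hmarg1 : H.map Prod.fst = uniformIcc τ) (b : ℝ) :
    H {p : ℝ × ℝ | p.1 = b} = 0 := by
  have h : {p : ℝ × ℝ | p.1 = b} = Prod.fst ⁻¹' {b} := rfl
  rw [h, ← Measure.map_apply measurable_fst (measurableSet_singleton b), hmarg1,
    uniformIcc, Measure.smul_apply, smul_eq_mul]
  have h0 : volume.restrict (Set.Icc 0 τ) {b} = 0 := by
    rw [Measure.restrict_apply (measurableSet_singleton b)]
    exact measure_mono_null Set.inter_subset_left (measure_singleton b)
  rw [h0, mul_zero]

lemma line2_null (τ : ℝ) (H : Measure (ℝ × ℝ))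
    (hmarg2 : H.map Prod.snd = uniformIcc τ) (c : ℝ) :
    H {p : ℝ × ℝ | p.2 = c} = 0 := by
  have h : {p : ℝ × ℝ | p.2 = c} = Prod.snd ⁻¹' {c} := rfl
  rw [h, ← Measure.map_apply measurable_snd (measurableSet_singleton c), hmarg2,
    uniformIcc, Measure.smul_apply, smul_eq_mul]
  have h0 : volume.restrict (Set.Icc 0 τ) {c} = 0 := by
    rw [Measure.restrict_apply (measurableSet_singleton c)]
    exact measure_mono_null Set.inter_subset_left (measure_singleton c)
  rw [h0, mul_zero]

lemma frontier_Eset_null (τ : ℝ) (H : Measure (ℝ × ℝ))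
    (hmarg1 : H.map Prod.fst = uniformIcc τ)
    (hmarg2 : H.map Prod.snd = uniformIcc τ) (b c : ℝ) :
    H (frontier (Eset b c)) = 0 := by
  have hEq : Eset b c = (Set.Iic b ×ˢ (Set.univ : Set ℝ)) ∪ ((Set.univ : Set ℝ) ×ˢ Set.Iic c) := by
    ext p; simp [Eset, Set.mem_prod]
  have hsub : frontier (Eset b c) ⊆ {p : ℝ × ℝ | p.1 = b} ∪ {p : ℝ × ℝ | p.2 = c} := by
    rw [hEq]
    refine (frontier_union_subset _ _).trans ?_
    rw [frontier_prod_univ_eq, frontier_univ_prod_eq, frontier_Iic, frontier_Iic]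
    intro p hp
    simp only [Set.mem_union, Set.mem_prod, Set.mem_singleton_iff, Set.mem_univ, and_true,
      true_and, Set.mem_setOf_eq, Set.mem_inter_iff] at hp ⊢
    tauto
  exact measure_mono_null hsub
    (measure_union_null (line1_null τ H hmarg1 b) (line2_null τ H hmarg2 c))

theorem stmt12
    (τ : ℝ) (hτ : 1 / 2 ≤ τ)
    (H : Measure (ℝ × ℝ)) (hHprob : IsProbabilityMeasure H)
    (hconc : H ((Set.Icc (0 : ℝ) τ ×ˢ Set.Icc (0 : ℝ) τ)ᶜ) = 0)
    (hmarg1 : H.map Prod.fst = uniformIcc τ)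
    (hmarg2 : H.map Prod.snd = uniformIcc τ)
    (hA1 : ∀ x > (0 : ℝ), 0 < jointCDF H x x)
    (d : ℝ) (hd0 : 0 ≤ d) (hd1 : d < 1)
    (Hn : ℕ → Measure (ℝ × ℝ)) (hHnprob : ∀ n, IsProbabilityMeasure (Hn n))
    (hweak : WeakLim Hn H)
    (dn : ℕ → ℝ) (hdn : Tendsto dn atTop (nhds d))
    (sn : ℕ → ℝ × ℝ × ℝ) (hsn : ∀ n, sn n ∈ SimplexS)
    (hmax : ∀ n, ∀ s' ∈ SimplexS, payHat s' (Hn n) (dn n) ≤ payHat (sn n) (Hn n) (dn n))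
    (s : ℝ × ℝ × ℝ) (hs : s ∈ SimplexS)
    (hconv : Tendsto sn atTop (nhds s)) :
    ∀ s' ∈ SimplexS, payHat s' H d ≤ payHat s H d := by
  intro s' hs'
  haveI := hHprob
  set P : ProbabilityMeasure (ℝ × ℝ) := ⟨H, hHprob⟩ with hPdef
  set Pn : ℕ → ProbabilityMeasure (ℝ × ℝ) := fun n => ⟨Hn n, hHnprob n⟩ with hPndef
  have htend : Tendsto Pn atTop (𝓝 P) :=
    MeasureTheory.ProbabilityMeasure.tendsto_iff_forall_integral_tendsto.mpr hweak
  have key : ∀ b c : ℝ, Tendsto (fun n => ((Hn n) (Eset b c)).toReal) atTop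
      (𝓝 ((H (Eset b c)).toReal)) := by
    intro b c
    have h0 : (P : Measure (ℝ × ℝ)) (frontier (Eset b c)) = 0 :=
      frontier_Eset_null τ H hmarg1 hmarg2 b c
    have h1 := MeasureTheory.ProbabilityMeasure.tendsto_measure_of_null_frontier_of_tendsto'
      htend h0
    have h2 : H (Eset b c) ≠ ⊤ := measure_ne_top H _
    exact (ENNReal.tendsto_toReal h2).comp h1
  have hLam' : Tendsto (fun n => payHat s' (Hn n) (dn n)) atTop (𝓝 (payHat s' H d)) := by
    have hk := key s'.2.1 s'.2.2
    unfold payHat Lam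
    exact hdn.add (((tendsto_const_nhds.sub hdn).max tendsto_const_nhds).mul hk)
  have h1 : Tendsto (fun n => (sn n).1) atTop (𝓝 s.1) := (continuous_fst.tendsto s).comp hconv
  have hb : Tendsto (fun n => (sn n).2.1) atTop (𝓝 s.2.1) :=
    ((continuous_fst.comp continuous_snd).tendsto s).comp hconv
  have hc : Tendsto (fun n => (sn n).2.2) atTop (𝓝 s.2.2) :=
    ((continuous_snd.comp continuous_snd).tendsto s).comp hconv
  have ha : Tendsto (fun n => max ((sn n).1 - dn n) 0) atTop (𝓝 (max (s.1 - d) 0)) :=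
    (h1.sub hdn).max tendsto_const_nhds
  have main : ∀ k : ℕ, payHat s' H d ≤
      d + max (s.1 - d) 0 * (H (Eset (s.2.1 + 1/((k:ℝ)+1)) (s.2.2 + 1/((k:ℝ)+1)))).toReal := by
    intro k
    set ε : ℝ := 1/((k:ℝ)+1) with hεdef
    have hεpos : 0 < ε := by positivity
    have hevb : ∀ᶠ n in atTop, (sn n).2.1 ≤ s.2.1 + ε :=
      hb.eventually (eventually_le_nhds (lt_add_of_pos_right _ hεpos))
    have hevc : ∀ᶠ n in atTop, (sn n).2.2 ≤ s.2.2 + ε :=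
      hc.eventually (eventually_le_nhds (lt_add_of_pos_right _ hεpos))
    have hub : ∀ᶠ n in atTop, payHat s' (Hn n) (dn n) ≤
        dn n + max ((sn n).1 - dn n) 0 * ((Hn n) (Eset (s.2.1 + ε) (s.2.2 + ε))).toReal := by
      filter_upwards [hevb, hevc] with n hnb hnc
      refine (hmax n s' hs').trans ?_
      unfold payHat
      refine add_le_add_right (mul_le_mul_of_nonneg_left ?_ (le_max_right _ _)) _
      unfold Lam
      haveI := hHnprob n
      refine ENNReal.toReal_mono (measure_ne_top (Hn n) _) (measure_mono ?_)
      intro p hp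
      rcases hp with hp | hp
      · exact Or.inl (hp.trans hnb)
      · exact Or.inr (hp.trans hnc)
    have hrhs : Tendsto (fun n => dn n + max ((sn n).1 - dn n) 0 *
        ((Hn n) (Eset (s.2.1 + ε) (s.2.2 + ε))).toReal) atTop
        (𝓝 (d + max (s.1 - d) 0 * (H (Eset (s.2.1 + ε) (s.2.2 + ε))).toReal)) :=
      hdn.add (ha.mul (key _ _))
    exact le_of_tendsto_of_tendsto hLam' hrhs hub
  have hinter : (⋂ k : ℕ, Eset (s.2.1 + 1/((k:ℝ)+1)) (s.2.2 + 1/((k:ℝ)+1)))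
      = Eset s.2.1 s.2.2 := by
    ext p
    simp only [Set.mem_iInter, Eset, Set.mem_setOf_eq]
    constructor
    · intro h
      by_contra hcon
      push_neg at hcon
      obtain ⟨hb', hc'⟩ := hcon
      have hδ : 0 < min (p.1 - s.2.1) (p.2 - s.2.2) := lt_min (by linarith) (by linarith)
      obtain ⟨k, hk⟩ := exists_nat_one_div_lt hδ
      have h1' := min_le_left (p.1 - s.2.1) (p.2 - s.2.2)
      have h2' := min_le_right (p.1 - s.2.1) (p.2 - s.2.2)
      rcases h k with h' | h'
      · linarith
      · linarith
    · intro h k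
      rcases h with h | h
      · exact Or.inl (h.trans (le_add_of_nonneg_right (by positivity)))
      · exact Or.inr (h.trans (le_add_of_nonneg_right (by positivity)))
  have hmeaslim : Tendsto
      (fun k : ℕ => (H (Eset (s.2.1 + 1/((k:ℝ)+1)) (s.2.2 + 1/((k:ℝ)+1)))).toReal)
      atTop (𝓝 ((H (Eset s.2.1 s.2.2)).toReal)) := by
    have hanti : Antitone (fun k : ℕ => Eset (s.2.1 + 1/((k:ℝ)+1)) (s.2.2 + 1/((k:ℝ)+1))) := by
      intro k m hkm p hp
      have hkm' : (k:ℝ) + 1 ≤ (m:ℝ) + 1 := by exact_mod_cast add_le_add_left hkm 1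
      have hle : 1/((m:ℝ)+1) ≤ 1/((k:ℝ)+1) := one_div_le_one_div_of_le (by positivity) hkm'
      rcases hp with hp | hp
      · exact Or.inl (hp.trans (by linarith))
      · exact Or.inr (hp.trans (by linarith))
    have hmt := tendsto_measure_iInter_atTop (μ := H)
      (fun k => (measurable_Eset _ _).nullMeasurableSet) hanti ⟨0, measure_ne_top H _⟩
    rw [hinter] at hmt
    exact (ENNReal.tendsto_toReal (measure_ne_top H _)).comp hmt
  have hfinal : Tendsto (fun k : ℕ => d + max (s.1 - d) 0 *
      (H (Eset (s.2.1 + 1/((k:ℝ)+1)) (s.2.2 + 1/((k:ℝ)+1)))).toReal) atTop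
      (𝓝 (payHat s H d)) := by
    have hpay : payHat s H d = d + max (s.1 - d) 0 * (H (Eset s.2.1 s.2.2)).toReal := rfl
    rw [hpay]
    exact tendsto_const_nhds.add (tendsto_const_nhds.mul hmeaslim)
  exact ge_of_tendsto hfinal (Eventually.of_forall main)
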